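/- (Comparison between boundary conditions for h.) Let D be a finite subset of ℤ², B ⊆ D, and let (B,κ) and (B,κ′) be admissible boundary conditions such that for every v ∈ B, κ_v = [a_v,b_v] ∩ ℤ and κ′_v = [a′_v,b′_v] ∩ ℤ are (possibly unbounded) integer intervals with a_v ≤ a′_v and b_v ≤ b′_v. Then for every increasing function F : ℤ^D → ℝ, φ_D^{B,κ′}[F(h)] ≥ φ_D^{B,κ}[F(h)]. -/

import Mathlib

open scoped BigOperators

namespace SquareIce

/-- Vertices of the square lattice `ℤ²`. -/
abbrev V : Type := ℤ × ℤ

/-- Nearest-neighbour adjacency: Euclidean distance 1. -/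
def adj (u v : V) : Prop := (u.1 - v.1).natAbs + (u.2 - v.2).natAbs = 1

/-- Diagonal (`×`) adjacency: Euclidean distance `√2`. -/
def xadj (u v : V) : Prop := (u.1 - v.1).natAbs = 1 ∧ (u.2 - v.2).natAbs = 1

/-- `*`-adjacency: graph distance exactly 2 in `ℤ²`. -/
def starAdj (u v : V) : Prop := (u.1 - v.1).natAbs + (u.2 - v.2).natAbs = 2

/-- A vertex is even when the sum of its coordinates is even. -/
def IsEvenV (v : V) : Prop := Even (v.1 + v.2)

/-- Squared Euclidean distance between two vertices. -/
def distSq (u v : V) : ℤ := (u.1 - v.1) ^ 2 + (u.2 - v.2) ^ 2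

/-- Sup-norm of a vertex. -/
def infNorm (v : V) : ℤ := max |v.1| |v.2|

/-- `h` is a height function on `D` (normalised to vanish outside `D`):
increments of absolute value one along edges of `D`, and even values on even
vertices (equivalently, `h v` has the parity of `v.1 + v.2`). -/
def IsHeightFn (D : Set V) (h : V → ℤ) : Prop :=
  (∀ u v, u ∈ D → v ∈ D → adj u v → |h u - h v| = 1) ∧
  (∀ v ∈ D, Even (h v + v.1 + v.2)) ∧ (∀ v, v ∉ D → h v = 0)

/-- Boundary of `D`: vertices of `D` with a nearest neighbour outside `D`. -/
def bdry (D : Set V) : Set V := {v | v ∈ D ∧ ∃ u, u ∉ D ∧ adj u v}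

/-- `A` and `B` are joined by a `rel`-path all of whose vertices lie in `S`. -/
def Connected (rel : V → V → Prop) (S A B : Set V) : Prop :=
  ∃ p : List V, ∃ hp : p ≠ [], List.Chain' rel p ∧ (∀ v ∈ p, v ∈ S) ∧
    p.head hp ∈ A ∧ p.getLast hp ∈ B

/-- `S` is the vertex set of a closed `×`-path. -/
def IsXCircuit (S : Set V) : Prop :=
  ∃ p : List V, ∃ hp : p ≠ [], List.Chain' xadj p ∧ p.head hp = p.getLast hp ∧
    {v | v ∈ p} = S

/-- A domain: a finite set whose boundary is a `×`-circuit. -/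
def IsDomain (D : Set V) : Prop := D.Finite ∧ IsXCircuit (bdry D)

/-- An even domain: a domain whose boundary consists of even vertices. -/
def IsEvenDomain (D : Set V) : Prop := IsDomain D ∧ ∀ v ∈ bdry D, IsEvenV v

/-- Height functions on `D` whose value at every `v ∈ B` lies in `κ v`. -/
def HomSet (D B : Set V) (κ : V → Set ℤ) : Set (V → ℤ) :=
  {h | IsHeightFn D h ∧ ∀ v ∈ B, h v ∈ κ v}

/-- Height functions on `D` with prescribed boundary values `κ` on `∂D`. -/
def HomBC (D : Set V) (κ : V → ℤ) : Set (V → ℤ) :=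
  {h | IsHeightFn D h ∧ ∀ v ∈ bdry D, h v = κ v}

/-- Height functions on `D` vanishing on `∂D`. -/
def Hom0 (D : Set V) : Set (V → ℤ) := HomBC D (fun _ => 0)

/-- Probability of `A` under the uniform measure on the finite set `S`. -/
noncomputable def pr {α : Type*} (S A : Set α) : ℝ :=
  (Nat.card (S ∩ A : Set α) : ℝ) / (Nat.card S : ℝ)

/-- Expectation of `f` under the uniform measure on the finite set `S`. -/
noncomputable def expec {α : Type*} (S : Set α) (f : α → ℝ) : ℝ :=
  (∑ᶠ x ∈ S, f x) / (Nat.card S : ℝ)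

/-- The box `Λ_{a,b} = ([-a,a] × [-b,b]) ∩ ℤ²`. -/
def Lam2 (a b : ℤ) : Set V := {v | |v.1| ≤ a ∧ |v.2| ≤ b}

/-- The box `Λ_a`. -/
def Lam (a : ℤ) : Set V := Lam2 a a

def leftSide (a b : ℤ) : Set V := {v | v.1 = -a ∧ |v.2| ≤ b}
def rightSide (a b : ℤ) : Set V := {v | v.1 = a ∧ |v.2| ≤ b}
def topSide (a b : ℤ) : Set V := {v | |v.1| ≤ a ∧ v.2 = b}
def botSide (a b : ℤ) : Set V := {v | |v.1| ≤ a ∧ v.2 = -b}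

/-- Horizontal crossing of `Λ_{a,b}` by a `rel`-path of vertices satisfying `P`. -/
def HCross (rel : V → V → Prop) (a b : ℤ) (P : V → Prop) : Prop :=
  Connected rel {v | v ∈ Lam2 a b ∧ P v} (leftSide a b) (rightSide a b)

/-- Vertical crossing of `Λ_{a,b}` by a `rel`-path of vertices satisfying `P`. -/
def VCross (rel : V → V → Prop) (a b : ℤ) (P : V → Prop) : Prop :=
  Connected rel {v | v ∈ Lam2 a b ∧ P v} (topSide a b) (botSide a b)

/-- `F` is increasing with respect to the pointwise order on `D`. -/
def IncreasingOn (D : Set V) (F : (V → ℤ) → ℝ) : Prop :=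
  ∀ h h' : V → ℤ, (∀ v ∈ D, h v ≤ h' v) → F h ≤ F h'

/-- The even box `Λ_m^even`: everything inside or on the even `×`-circuit
surrounding the origin contained in `Λ_{m+1} ∖ Λ_{m-1}`. -/
def LamEven (m : ℤ) : Set V := Lam m ∪ {v | infNorm v = m + 1 ∧ IsEvenV v}

/-- A quad: a domain `D` together with an enumeration `p` of its boundary
`×`-circuit (closed: first vertex repeated at the end) and marked points
`a = p[0]`, `b = p[ib]`, `c = p[ic]`, `d = p[idx]` in cyclic order. -/
structure Quad where
  D : Set V
  p : List V
  hp : p ≠ []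
  hchain : List.Chain' xadj p
  hclosed : p.head hp = p.getLast hp
  hbd : {v | v ∈ p} = bdry D
  hfin : D.Finite
  ib : ℕ
  ic : ℕ
  idx : ℕ
  h0b : 0 < ib
  hbc : ib < ic
  hcd : ic < idx
  hdlen : idx + 1 < p.length

namespace Quad

def ptA (q : Quad) : V := q.p.head q.hp
def ptB (q : Quad) : V := q.p.getD q.ib ((0 : ℤ), (0 : ℤ))
def ptC (q : Quad) : V := q.p.getD q.ic ((0 : ℤ), (0 : ℤ))
def ptD (q : Quad) : V := q.p.getD q.idx ((0 : ℤ), (0 : ℤ))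

/-- The (closed) arc `[ab]` of the boundary of a quad. -/
def arcAB (q : Quad) : Set V := {v | v ∈ q.p.take (q.ib + 1)}

/-- The (closed) arc `[bc]` of the boundary of a quad. -/
def arcBC (q : Quad) : Set V := {v | v ∈ (q.p.drop q.ib).take (q.ic - q.ib + 1)}

/-- The (closed) arc `[cd]` of the boundary of a quad. -/
def arcCD (q : Quad) : Set V := {v | v ∈ (q.p.drop q.ic).take (q.idx - q.ic + 1)}

/-- The (closed) arc `[da]` of the boundary of a quad. -/
def arcDA (q : Quad) : Set V := {v | v ∈ q.p.drop q.idx}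

/-- The open arc `(bc)` (excluding the endpoints `b` and `c`). -/
def openBC (q : Quad) : Set V :=
  {v | v ∈ (((q.p.drop q.ib).take (q.ic - q.ib + 1)).drop 1).dropLast}

/-- The open arc `(da)` (excluding the endpoints `d` and `a`). -/
def openDA (q : Quad) : Set V := {v | v ∈ ((q.p.drop q.idx).drop 1).dropLast}

end Quad


section CBCaux

/-- Disagreement edge relation for two height functions. -/
def Eh (h h' : V → ℤ) (x y : V) : Prop := adj x y ∧ h x ≠ h' x ∧ h y ≠ h' y

lemma adj_symm' {u v : V} (h : adj u v) : adj v u := by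
  unfold adj at h ⊢; omega

/-- The component of `v` in the disagreement graph is "good": swapping on it
preserves the boundary conditions. -/
def goodC (B : Set V) (κ κ' : V → Set ℤ) (h h' : V → ℤ) (v : V) : Prop :=
  ∀ u, Relation.ReflTransGen (Eh h h') v u → u ∈ B →
    max (h u) (h' u) ∈ κ u ∧ min (h u) (h' u) ∈ κ' u

def swpP (B : Set V) (κ κ' : V → Set ℤ) (h h' : V → ℤ) (v : V) : Prop :=
  h v ≠ h' v ∧ goodC B κ κ' h h' v

open Classical in
noncomputable def g1 (B : Set V) (κ κ' : V → Set ℤ) (h h' : V → ℤ) : V → ℤ :=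
  fun v => if swpP B κ κ' h h' v then h' v else h v

open Classical in
noncomputable def g2 (B : Set V) (κ κ' : V → Set ℤ) (h h' : V → ℤ) : V → ℤ :=
  fun v => if swpP B κ κ' h h' v then h v else h' v


lemma g1_pos {B : Set V} {κ κ' : V → Set ℤ} {h h' : V → ℤ} {v : V}
    (s : swpP B κ κ' h h' v) : g1 B κ κ' h h' v = h' v := by
  unfold g1; rw [if_pos s]

lemma g1_neg {B : Set V} {κ κ' : V → Set ℤ} {h h' : V → ℤ} {v : V}
    (s : ¬ swpP B κ κ' h h' v) : g1 B κ κ' h h' v = h v := by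
  unfold g1; rw [if_neg s]

lemma g2_pos {B : Set V} {κ κ' : V → Set ℤ} {h h' : V → ℤ} {v : V}
    (s : swpP B κ κ' h h' v) : g2 B κ κ' h h' v = h v := by
  unfold g2; rw [if_pos s]

lemma g2_neg {B : Set V} {κ κ' : V → Set ℤ} {h h' : V → ℤ} {v : V}
    (s : ¬ swpP B κ κ' h h' v) : g2 B κ κ' h h' v = h' v := by
  unfold g2; rw [if_neg s]

lemma mem_of_ne {D : Set V} {h h' : V → ℤ} (hh : IsHeightFn D h) (hh' : IsHeightFn D h')
    {v : V} (hne : h v ≠ h' v) : v ∈ D := by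
  by_contra hv
  exact hne ((hh.2.2 v hv).trans (hh'.2.2 v hv).symm)

lemma sign_step {D : Set V} {h h' : V → ℤ} (hh : IsHeightFn D h) (hh' : IsHeightFn D h')
    {u v : V} (e : Eh h h' u v) : h u < h' u ↔ h v < h' v := by
  have hu : u ∈ D := mem_of_ne hh hh' e.2.1
  have hv : v ∈ D := mem_of_ne hh hh' e.2.2
  have A1 := hh.1 u v hu hv e.1
  have A2 := hh'.1 u v hu hv e.1
  have n1 := e.2.1
  have n2 := e.2.2
  obtain ⟨p1, hp1⟩ := hh.2.1 u hu
  obtain ⟨p2, hp2⟩ := hh'.2.1 u hu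
  obtain ⟨p3, hp3⟩ := hh.2.1 v hv
  obtain ⟨p4, hp4⟩ := hh'.2.1 v hv
  rcases (abs_eq (by norm_num : (0:ℤ) ≤ 1)).mp A1 with h1 | h1 <;>
    rcases (abs_eq (by norm_num : (0:ℤ) ≤ 1)).mp A2 with h2 | h2 <;> omega

lemma sign_reach {D : Set V} {h h' : V → ℤ} (hh : IsHeightFn D h) (hh' : IsHeightFn D h')
    {u v : V} (hr : Relation.ReflTransGen (Eh h h') u v) : (h u < h' u ↔ h v < h' v) := by
  induction hr with
  | refl => exact Iff.rfl
  | tail _ e ih => exact ih.trans (sign_step hh hh' e)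

lemma ne_reach {h h' : V → ℤ} {u v : V} (hr : Relation.ReflTransGen (Eh h h') u v)
    (hne : h u ≠ h' u) : h v ≠ h' v := by
  induction hr with
  | refl => exact hne
  | tail _ e _ => exact e.2.2

lemma goodC_step {B : Set V} {κ κ' : V → Set ℤ} {h h' : V → ℤ} {u v : V}
    (e : Eh h h' u v) (hg : goodC B κ κ' h h' u) : goodC B κ κ' h h' v :=
  fun w hw hwB => hg w (Relation.ReflTransGen.head e hw) hwB

lemma g1_height {D B : Set V} {κ κ' : V → Set ℤ} {h h' : V → ℤ}
    (hh : IsHeightFn D h) (hh' : IsHeightFn D h') : IsHeightFn D (g1 B κ κ' h h') := by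
  refine ⟨?_, ?_, ?_⟩
  · intro u v hu hv huv
    unfold g1
    by_cases su : swpP B κ κ' h h' u <;> by_cases sv : swpP B κ κ' h h' v
    · rw [if_pos su, if_pos sv]; exact hh'.1 u v hu hv huv
    · rcases eq_or_ne (h v) (h' v) with hveq | hvne
      · rw [if_pos su, if_neg sv, hveq]; exact hh'.1 u v hu hv huv
      · exact absurd ⟨hvne, goodC_step ⟨huv, su.1, hvne⟩ su.2⟩ sv
    · rcases eq_or_ne (h u) (h' u) with hueq | hune
      · rw [if_neg su, if_pos sv, hueq]; exact hh'.1 u v hu hv huv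
      · exact absurd ⟨hune, goodC_step ⟨adj_symm' huv, sv.1, hune⟩ sv.2⟩ su
    · rw [if_neg su, if_neg sv]; exact hh.1 u v hu hv huv
  · intro v hv; unfold g1; by_cases s : swpP B κ κ' h h' v
    · rw [if_pos s]; exact hh'.2.1 v hv
    · rw [if_neg s]; exact hh.2.1 v hv
  · intro v hv; unfold g1; by_cases s : swpP B κ κ' h h' v
    · rw [if_pos s]; exact hh'.2.2 v hv
    · rw [if_neg s]; exact hh.2.2 v hv

lemma g2_height {D B : Set V} {κ κ' : V → Set ℤ} {h h' : V → ℤ}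
    (hh : IsHeightFn D h) (hh' : IsHeightFn D h') : IsHeightFn D (g2 B κ κ' h h') := by
  refine ⟨?_, ?_, ?_⟩
  · intro u v hu hv huv
    unfold g2
    by_cases su : swpP B κ κ' h h' u <;> by_cases sv : swpP B κ κ' h h' v
    · rw [if_pos su, if_pos sv]; exact hh.1 u v hu hv huv
    · rcases eq_or_ne (h v) (h' v) with hveq | hvne
      · rw [if_pos su, if_neg sv, ← hveq]; exact hh.1 u v hu hv huv
      · exact absurd ⟨hvne, goodC_step ⟨huv, su.1, hvne⟩ su.2⟩ sv
    · rcases eq_or_ne (h u) (h' u) with hueq | hune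
      · rw [if_neg su, if_pos sv, ← hueq]; exact hh.1 u v hu hv huv
      · exact absurd ⟨hune, goodC_step ⟨adj_symm' huv, sv.1, hune⟩ sv.2⟩ su
    · rw [if_neg su, if_neg sv]; exact hh'.1 u v hu hv huv
  · intro v hv; unfold g2; by_cases s : swpP B κ κ' h h' v
    · rw [if_pos s]; exact hh.2.1 v hv
    · rw [if_neg s]; exact hh'.2.1 v hv
  · intro v hv; unfold g2; by_cases s : swpP B κ κ' h h' v
    · rw [if_pos s]; exact hh.2.2 v hv
    · rw [if_neg s]; exact hh'.2.2 v hv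

lemma g1g2_cases {B : Set V} {κ κ' : V → Set ℤ} {h h' : V → ℤ} (v : V) :
    (g1 B κ κ' h h' v = h v ∧ g2 B κ κ' h h' v = h' v) ∨
    (g1 B κ κ' h h' v = h' v ∧ g2 B κ κ' h h' v = h v) := by
  unfold g1 g2
  by_cases s : swpP B κ κ' h h' v
  · right; rw [if_pos s, if_pos s]; exact ⟨rfl, rfl⟩
  · left; rw [if_neg s, if_neg s]; exact ⟨rfl, rfl⟩

lemma g_ne_iff {B : Set V} {κ κ' : V → Set ℤ} {h h' : V → ℤ} (v : V) :
    g1 B κ κ' h h' v ≠ g2 B κ κ' h h' v ↔ h v ≠ h' v := by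
  rcases g1g2_cases (B := B) (κ := κ) (κ' := κ') (h := h) (h' := h') v with ⟨e1, e2⟩ | ⟨e1, e2⟩ <;>
    rw [e1, e2]
  exact ne_comm

lemma g_max {B : Set V} {κ κ' : V → Set ℤ} {h h' : V → ℤ} (v : V) :
    max (g1 B κ κ' h h' v) (g2 B κ κ' h h' v) = max (h v) (h' v) := by
  rcases g1g2_cases (B := B) (κ := κ) (κ' := κ') (h := h) (h' := h') v with ⟨e1, e2⟩ | ⟨e1, e2⟩ <;>
    rw [e1, e2]
  exact max_comm _ _

lemma g_min {B : Set V} {κ κ' : V → Set ℤ} {h h' : V → ℤ} (v : V) :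
    min (g1 B κ κ' h h' v) (g2 B κ κ' h h' v) = min (h v) (h' v) := by
  rcases g1g2_cases (B := B) (κ := κ) (κ' := κ') (h := h) (h' := h') v with ⟨e1, e2⟩ | ⟨e1, e2⟩ <;>
    rw [e1, e2]
  exact min_comm _ _

lemma Eh_g_iff {B : Set V} {κ κ' : V → Set ℤ} {h h' : V → ℤ} (x y : V) :
    Eh (g1 B κ κ' h h') (g2 B κ κ' h h') x y ↔ Eh h h' x y := by
  unfold Eh
  rw [g_ne_iff, g_ne_iff]

lemma reach_g_iff {B : Set V} {κ κ' : V → Set ℤ} {h h' : V → ℤ} (x y : V) :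
    Relation.ReflTransGen (Eh (g1 B κ κ' h h') (g2 B κ κ' h h')) x y ↔
      Relation.ReflTransGen (Eh h h') x y := by
  constructor
  · exact Relation.ReflTransGen.mono (fun a b hab => (Eh_g_iff (B := B) (κ := κ) (κ' := κ') (h := h) (h' := h') a b).mp hab) x y
  · exact Relation.ReflTransGen.mono (fun a b hab => (Eh_g_iff (B := B) (κ := κ) (κ' := κ') (h := h) (h' := h') a b).mpr hab) x y

lemma swp_g_iff {B : Set V} {κ κ' : V → Set ℤ} {h h' : V → ℤ} (v : V) :
    swpP B κ κ' (g1 B κ κ' h h') (g2 B κ κ' h h') v ↔ swpP B κ κ' h h' v := by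
  unfold swpP goodC
  apply and_congr (g_ne_iff v)
  constructor
  · intro H u hr huB
    have := H u ((reach_g_iff v u).mpr hr) huB
    rwa [g_max, g_min] at this
  · intro H u hr huB
    rw [g_max, g_min]
    exact H u ((reach_g_iff v u).mp hr) huB

lemma g1_invol {B : Set V} {κ κ' : V → Set ℤ} {h h' : V → ℤ} :
    g1 B κ κ' (g1 B κ κ' h h') (g2 B κ κ' h h') = h := by
  funext v
  by_cases s : swpP B κ κ' h h' v
  · rw [g1_pos ((swp_g_iff v).mpr s), g2_pos s]
  · rw [g1_neg (fun hs => s ((swp_g_iff v).mp hs)), g1_neg s]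

lemma g2_invol {B : Set V} {κ κ' : V → Set ℤ} {h h' : V → ℤ} :
    g2 B κ κ' (g1 B κ κ' h h') (g2 B κ κ' h h') = h' := by
  funext v
  by_cases s : swpP B κ κ' h h' v
  · rw [g2_pos ((swp_g_iff v).mpr s), g1_pos s]
  · rw [g2_neg (fun hs => s ((swp_g_iff v).mp hs)), g2_neg s]

end CBCaux

/-- Comparison between boundary conditions for `h`. -/
theorem cbc_h (D : Set V) (hD : D.Finite) (B : Set V) (hB : B ⊆ D)
    (κ κ' : V → Set ℤ) (a b a' b' : V → EReal)
    (hκ : ∀ v ∈ B, κ v = {x : ℤ | a v ≤ ((x : ℝ) : EReal) ∧ ((x : ℝ) : EReal) ≤ b v})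
    (hκ' : ∀ v ∈ B, κ' v = {x : ℤ | a' v ≤ ((x : ℝ) : EReal) ∧ ((x : ℝ) : EReal) ≤ b' v})
    (ha : ∀ v ∈ B, a v ≤ a' v) (hb : ∀ v ∈ B, b v ≤ b' v)
    (hne : (HomSet D B κ).Nonempty) (hfin : (HomSet D B κ).Finite)
    (hne' : (HomSet D B κ').Nonempty) (hfin' : (HomSet D B κ').Finite)
    (F : (V → ℤ) → ℝ) (hF : IncreasingOn D F) :
    expec (HomSet D B κ) F ≤ expec (HomSet D B κ') F := by
  classical
  set A := HomSet D B κ with hA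
  set A' := HomSet D B κ' with hA'
  -- membership lemmas for the swapped pair
  have hg1mem : ∀ f f', f ∈ A → f' ∈ A' → g1 B κ κ' f f' ∈ A := by
    intro f f' hf hf'
    refine ⟨g1_height hf.1 hf'.1, ?_⟩
    intro v hvB
    by_cases s : swpP B κ κ' f f' v
    · rw [g1_pos s]
      rcases le_total (f v) (f' v) with hle | hle
      · have hmx := (s.2 v Relation.ReflTransGen.refl hvB).1
        rwa [max_eq_right hle] at hmx
      · rw [hκ v hvB]
        have h1 := hf.2 v hvB; rw [hκ v hvB] at h1
        have h2 := hf'.2 v hvB; rw [hκ' v hvB] at h2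
        refine ⟨le_trans (ha v hvB) h2.1, le_trans ?_ h1.2⟩
        exact_mod_cast hle
    · rw [g1_neg s]; exact hf.2 v hvB
  have hg2mem : ∀ f f', f ∈ A → f' ∈ A' → g2 B κ κ' f f' ∈ A' := by
    intro f f' hf hf'
    refine ⟨g2_height hf.1 hf'.1, ?_⟩
    intro v hvB
    by_cases s : swpP B κ κ' f f' v
    · rw [g2_pos s]
      rcases le_total (f v) (f' v) with hle | hle
      · have hmn := (s.2 v Relation.ReflTransGen.refl hvB).2
        rwa [min_eq_left hle] at hmn
      · rw [hκ' v hvB]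
        have h1 := hf.2 v hvB; rw [hκ v hvB] at h1
        have h2 := hf'.2 v hvB; rw [hκ' v hvB] at h2
        refine ⟨le_trans h2.1 ?_, le_trans h1.2 (hb v hvB)⟩
        exact_mod_cast hle
    · rw [g2_neg s]; exact hf'.2 v hvB
  have hle2 : ∀ f f', f ∈ A → f' ∈ A' → ∀ v, f v ≤ g2 B κ κ' f f' v := by
    intro f f' hf hf' v
    by_cases s : swpP B κ κ' f f' v
    · rw [g2_pos s]
    · rw [g2_neg s]
      by_contra hlt
      push_neg at hlt
      apply s
      refine ⟨by omega, ?_⟩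
      intro u hr huB
      have hneu : f u ≠ f' u := ne_reach hr (by omega)
      have hnlt : ¬ (f u < f' u) := fun hlt' =>
        absurd ((sign_reach hf.1 hf'.1 hr).mpr hlt') (by omega)
      have hgt : f' u ≤ f u := by omega
      constructor
      · rw [max_eq_left hgt]; exact hf.2 u huB
      · rw [min_eq_right hgt]; exact hf'.2 u huB
  -- finset versions
  have hcoeA : (hfin.toFinset : Set (V → ℤ)) = A := hfin.coe_toFinset
  have hcoeA' : (hfin'.toFinset : Set (V → ℤ)) = A' := hfin'.coe_toFinset
  set sA := hfin.toFinset with hsA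
  set sA' := hfin'.toFinset with hsA'
  have hmemA : ∀ f, f ∈ sA ↔ f ∈ A := fun f => hfin.mem_toFinset
  have hmemA' : ∀ f, f ∈ sA' ↔ f ∈ A' := fun f => hfin'.mem_toFinset
  have hcardA : (Nat.card A : ℝ) = (sA.card : ℝ) := by
    rw [Nat.card_coe_set_eq, Set.ncard_eq_toFinset_card A hfin]
  have hcardA' : (Nat.card A' : ℝ) = (sA'.card : ℝ) := by
    rw [Nat.card_coe_set_eq, Set.ncard_eq_toFinset_card A' hfin']
  have hposA : (0 : ℝ) < (sA.card : ℝ) := by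
    have : sA.Nonempty := ⟨hne.choose, (hmemA _).mpr hne.choose_spec⟩
    exact_mod_cast Finset.card_pos.mpr this
  have hposA' : (0 : ℝ) < (sA'.card : ℝ) := by
    have : sA'.Nonempty := ⟨hne'.choose, (hmemA' _).mpr hne'.choose_spec⟩
    exact_mod_cast Finset.card_pos.mpr this
  have hsum : ∑ᶠ x ∈ A, F x = ∑ x ∈ sA, F x := by
    rw [← hcoeA, finsum_mem_coe_finset]
  have hsum' : ∑ᶠ x ∈ A', F x = ∑ x ∈ sA', F x := by
    rw [← hcoeA', finsum_mem_coe_finset]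
  -- the key inequality on the product
  have key : ∑ p ∈ sA ×ˢ sA', F p.1 ≤ ∑ p ∈ sA ×ˢ sA', F p.2 := by
    have step1 : ∑ p ∈ sA ×ˢ sA', F p.1 ≤ ∑ p ∈ sA ×ˢ sA', F (g2 B κ κ' p.1 p.2) := by
      apply Finset.sum_le_sum
      intro p hp
      obtain ⟨hp1, hp2⟩ := Finset.mem_product.mp hp
      exact hF p.1 (g2 B κ κ' p.1 p.2)
        (fun v _ => hle2 p.1 p.2 ((hmemA _).mp hp1) ((hmemA' _).mp hp2) v)
    have step2 : ∑ p ∈ sA ×ˢ sA', F (g2 B κ κ' p.1 p.2) = ∑ p ∈ sA ×ˢ sA', F p.2 := by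
      refine Finset.sum_nbij' (fun p => (g1 B κ κ' p.1 p.2, g2 B κ κ' p.1 p.2))
        (fun p => (g1 B κ κ' p.1 p.2, g2 B κ κ' p.1 p.2)) ?_ ?_ ?_ ?_ ?_
      · intro p hp
        obtain ⟨hp1, hp2⟩ := Finset.mem_product.mp hp
        exact Finset.mem_product.mpr
          ⟨(hmemA _).mpr (hg1mem p.1 p.2 ((hmemA _).mp hp1) ((hmemA' _).mp hp2)),
           (hmemA' _).mpr (hg2mem p.1 p.2 ((hmemA _).mp hp1) ((hmemA' _).mp hp2))⟩
      · intro p hp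
        obtain ⟨hp1, hp2⟩ := Finset.mem_product.mp hp
        exact Finset.mem_product.mpr
          ⟨(hmemA _).mpr (hg1mem p.1 p.2 ((hmemA _).mp hp1) ((hmemA' _).mp hp2)),
           (hmemA' _).mpr (hg2mem p.1 p.2 ((hmemA _).mp hp1) ((hmemA' _).mp hp2))⟩
      · intro p _
        exact Prod.ext g1_invol g2_invol
      · intro p _
        exact Prod.ext g1_invol g2_invol
      · intro p _
        rfl
    exact step1.trans_eq step2
  have prod1 : ∑ p ∈ sA ×ˢ sA', F p.1 = (∑ x ∈ sA, F x) * (sA'.card : ℝ) := by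
    rw [Finset.sum_product]
    simp only [Finset.sum_const, nsmul_eq_mul]
    rw [← Finset.mul_sum]
    ring
  have prod2 : ∑ p ∈ sA ×ˢ sA', F p.2 = (∑ y ∈ sA', F y) * (sA.card : ℝ) := by
    rw [Finset.sum_product]
    simp only [Finset.sum_const, nsmul_eq_mul]
    ring
  unfold expec
  rw [div_le_div_iff₀ (by rw [hcardA]; exact hposA) (by rw [hcardA']; exact hposA')]
  rw [hsum, hsum', hcardA, hcardA']
  calc (∑ x ∈ sA, F x) * (sA'.card : ℝ) = ∑ p ∈ sA ×ˢ sA', F p.1 := prod1.symm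
    _ ≤ ∑ p ∈ sA ×ˢ sA', F p.2 := key
    _ = (∑ y ∈ sA', F y) * (sA.card : ℝ) := prod2


end SquareIce
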